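/- The formal power series 1 + ∑_{n=0}^∞ T^{2^n + 1} over ℤ is not a rational function; that is, there do not exist nonzero polynomials f, g ∈ ℤ[T] with f(T) = g(T)·(1 + ∑_{n=0}^∞ T^{2^n+1}). -/

import Mathlib

open scoped Classical

/-- The formal power series `1 + ∑_{n=0}^∞ T^(2^n + 1)` over ℤ: its constant
coefficient is 1, and for m > 0 the coefficient of T^m is 1 if m = 2^n + 1 for
some n and 0 otherwise (each such m arises from at most one n). -/
noncomputable def Fseries : PowerSeries ℤ :=
  PowerSeries.mk fun m => if m = 0 then 1 else if ∃ n : ℕ, m = 2 ^ n + 1 then 1 else 0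

/-- The power series 1 + ∑_{n=0}^∞ T^(2^n+1) is not rational: there are no nonzero
polynomials f, g ∈ ℤ[T] with f = g · (1 + ∑ T^(2^n+1)) in ℤ[[T]]. -/
theorem stmt2 :
    ¬ ∃ f g : Polynomial ℤ, f ≠ 0 ∧ g ≠ 0 ∧
      (f : PowerSeries ℤ) = (g : PowerSeries ℤ) * Fseries := by
  rintro ⟨f, g, hf, hg, heq⟩
  set d := g.natDegree with hd
  obtain ⟨n, hn⟩ : ∃ n : ℕ, d + f.natDegree + 1 < 2 ^ n :=
    ⟨d + f.natDegree + 1, Nat.lt_two_pow_self⟩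
  set m := 2 ^ n + 1 + d with hm
  have hcoef := congrArg (PowerSeries.coeff (R := ℤ) m) heq
  rw [PowerSeries.coeff_mul] at hcoef
  have hleft : (PowerSeries.coeff (R := ℤ) m) (f : PowerSeries ℤ) = 0 := by
    rw [Polynomial.coeff_coe]
    apply Polynomial.coeff_eq_zero_of_natDegree_lt
    omega
  have hsum : ∑ p ∈ Finset.HasAntidiagonal.antidiagonal m,
      (PowerSeries.coeff (R := ℤ) p.1) (g : PowerSeries ℤ) * (PowerSeries.coeff (R := ℤ) p.2) Fseries
      = g.coeff d := by
    rw [Finset.sum_eq_single (d, 2 ^ n + 1)]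
    · have h0 : (2 ^ n + 1 : ℕ) ≠ 0 := by positivity
      simp only [Polynomial.coeff_coe, Fseries, PowerSeries.coeff_mk]
      rw [if_neg h0, if_pos ⟨n, rfl⟩, mul_one]
    · rintro ⟨i, j⟩ hmem hne
      simp only [Finset.HasAntidiagonal.mem_antidiagonal] at hmem
      by_cases hi : d < i
      · rw [Polynomial.coeff_coe, Polynomial.coeff_eq_zero_of_natDegree_lt hi, zero_mul]
      · push_neg at hi
        have hj0 : j ≠ 0 := by omega
        have hnotex : ¬ ∃ k, j = 2 ^ k + 1 := by
          rintro ⟨k, rfl⟩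
          have h1 : 2 ^ n ≤ 2 ^ k := by omega
          have h2 : 2 ^ k < 2 ^ (n + 1) := by
            have : 2 ^ (n + 1) = 2 ^ n * 2 := by ring
            omega
          have hk1 : n ≤ k := (Nat.pow_le_pow_iff_right one_lt_two).mp h1
          have hk2 : k < n + 1 := (Nat.pow_lt_pow_iff_right one_lt_two).mp h2
          have hkn : k = n := by omega
          subst hkn
          have hid : i = d := by omega
          exact hne (by simp [hid])
        simp only [Fseries, PowerSeries.coeff_mk]
        rw [if_neg hj0, if_neg hnotex, mul_zero]
    · intro h
      exact absurd (Finset.HasAntidiagonal.mem_antidiagonal.mpr (by omega)) h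
  rw [hleft, hsum] at hcoef
  exact (Polynomial.leadingCoeff_ne_zero.mpr hg) hcoef.symm
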